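/- Let V ∈ L¹[0,T] and let u, v be the solutions of -u'' + |V| u = 0, u(0)=0, u'(0)=1 and -v'' + V v = 0, v(0)=0, v'(0)=1, respectively. Then u(t) ≥ v(t) for all t ∈ [0,T]. -/
import Mathlib

open MeasureTheory Set intervalIntegral Real

private lemma II_sub {f : ℝ → ℝ} {T a b : ℝ} (hf : IntegrableOn f (Icc 0 T))
    (h0 : 0 ≤ a) (hab : a ≤ b) (hbT : b ≤ T) : IntervalIntegrable f volume a b :=
  (hf.mono_set (by rw [uIcc_of_le hab]; exact Icc_subset_Icc h0 hbT)).intervalIntegrable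

private lemma gronwall_aux (T : ℝ) (hT : 0 < T) (a ψ : ℝ → ℝ)
    (ha : IntegrableOn a (Icc 0 T)) (ha0 : ∀ s ∈ Icc (0:ℝ) T, 0 ≤ a s)
    (hψc : ContinuousOn ψ (Icc 0 T)) (hψ0 : ∀ s ∈ Icc (0:ℝ) T, 0 ≤ ψ s)
    (key : ∀ t ∈ Icc (0:ℝ) T, ψ t ≤ ∫ s in (0:ℝ)..t, ∫ r in (0:ℝ)..s, a r * ψ r) :
    ∀ t ∈ Icc (0:ℝ) T, ψ t = 0 := by
  set p : ℝ → ℝ := fun r => a r * ψ r with hp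
  have hpi : IntegrableOn p (Icc 0 T) := ha.mul_continuousOn hψc isCompact_Icc
  have hp0 : ∀ r ∈ Icc (0:ℝ) T, 0 ≤ p r := fun r hr => mul_nonneg (ha0 r hr) (hψ0 r hr)
  set F : ℝ → ℝ := fun s => ∫ r in (0:ℝ)..s, p r with hF
  have hFc : ContinuousOn F (Icc 0 T) := by
    have := continuousOn_primitive_interval (μ := volume) (a := (0:ℝ)) (b := T)
      (f := p) (by rwa [uIcc_of_le hT.le])
    rwa [uIcc_of_le hT.le] at this
  -- main set
  set S : Set ℝ := {t | t ∈ Icc (0:ℝ) T ∧ ∀ s ∈ Icc (0:ℝ) t, ψ s = 0} with hS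
  -- a point is zero if ψ vanishes before it
  have zero_on : ∀ c ∈ Icc (0:ℝ) T, (∀ s ∈ Ico (0:ℝ) c, ψ s = 0) → ψ c = 0 := by
    intro c hc h0c
    have hFz : ∀ s ∈ Ioo (0:ℝ) c, F s = 0 := by
      intro s hs
      have : ∀ r ∈ Ioo (0:ℝ) s, p r = 0 := by
        intro r hr
        have : ψ r = 0 := h0c r ⟨hr.1.le, hr.2.trans hs.2⟩
        simp [hp, this]
      show (∫ r in (0:ℝ)..s, p r) = 0
      rw [intervalIntegral.integral_of_le hs.1.le, integral_Ioc_eq_integral_Ioo]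
      exact MeasureTheory.setIntegral_eq_zero_of_forall_eq_zero this
    have h1 : ψ c ≤ ∫ s in (0:ℝ)..c, F s := key c hc
    have h2 : (∫ s in (0:ℝ)..c, F s) = 0 := by
      rw [intervalIntegral.integral_of_le hc.1, integral_Ioc_eq_integral_Ioo]
      exact MeasureTheory.setIntegral_eq_zero_of_forall_eq_zero hFz
    exact le_antisymm (h2 ▸ h1) (hψ0 c hc)
  have h0S : (0:ℝ) ∈ S := by
    refine ⟨⟨le_refl _, hT.le⟩, ?_⟩
    intro s hs
    have : s = 0 := le_antisymm (hs.2) hs.1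
    subst this
    exact zero_on 0 ⟨le_refl _, hT.le⟩ (fun s hs => absurd hs.2 (not_lt.mpr hs.1))
  have hSne : S.Nonempty := ⟨0, h0S⟩
  have hSbdd : BddAbove S := ⟨T, fun t ht => ht.1.2⟩
  set c := sSup S with hc
  have hc0 : 0 ≤ c := le_csSup hSbdd h0S
  have hcT : c ≤ T := csSup_le hSne (fun t ht => ht.1.2)
  have hcIcc : c ∈ Icc (0:ℝ) T := ⟨hc0, hcT⟩
  have hzc : ∀ s ∈ Icc (0:ℝ) c, ψ s = 0 := by
    have hico : ∀ s ∈ Ico (0:ℝ) c, ψ s = 0 := by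
      intro s hs
      obtain ⟨t, htS, hst⟩ := exists_lt_of_lt_csSup hSne hs.2
      exact htS.2 s ⟨hs.1, hst.le⟩
    intro s hs
    rcases lt_or_eq_of_le hs.2 with h | h
    · exact hico s ⟨hs.1, h⟩
    · rw [h]; exact zero_on c ⟨hc0, hcT⟩ hico
  by_cases hcT' : c < T
  · exfalso
    set A : ℝ := ∫ r in Icc (0:ℝ) T, a r with hA
    have hA0 : 0 ≤ A := setIntegral_nonneg measurableSet_Icc ha0
    set δ : ℝ := min (T - c) (1 / (A + 1)) with hδ
    have hδ0 : 0 < δ := lt_min (by linarith) (by positivity)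
    set d := c + δ with hd
    have hdT : d ≤ T := by
      have : δ ≤ T - c := min_le_left _ _
      linarith
    have hcd : c ≤ d := by linarith
    -- max of ψ on [c, d]
    obtain ⟨t₀, ht₀, ht₀max⟩ := isCompact_Icc.exists_isMaxOn (nonempty_Icc.mpr hcd)
      (hψc.mono (Icc_subset_Icc hc0 hdT))
    set M := ψ t₀ with hM
    have hM0 : 0 ≤ M := hψ0 t₀ ⟨hc0.trans ht₀.1, ht₀.2.trans hdT⟩
    -- key bound: for t in [c,d], ψ t ≤ δ * (A * M)
    have hbound : ∀ t ∈ Icc c d, ψ t ≤ δ * (A * M) := by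
      intro t ht
      have htIcc : t ∈ Icc (0:ℝ) T := ⟨hc0.trans ht.1, ht.2.trans hdT⟩
      have h1 : ψ t ≤ ∫ s in (0:ℝ)..t, F s := key t htIcc
      -- split outer integral
      have hFint1 : IntervalIntegrable F volume 0 c :=
        ((hFc.mono (Icc_subset_Icc le_rfl hcT)).intervalIntegrable_of_Icc hc0)
      have hFint2 : IntervalIntegrable F volume c t :=
        ((hFc.mono (Icc_subset_Icc hc0 htIcc.2)).intervalIntegrable_of_Icc ht.1)
      have hsplit : (∫ s in (0:ℝ)..t, F s)
          = (∫ s in (0:ℝ)..c, F s) + ∫ s in c..t, F s :=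
        (integral_add_adjacent_intervals hFint1 hFint2).symm
      have hz1 : (∫ s in (0:ℝ)..c, F s) = 0 := by
        rw [intervalIntegral.integral_of_le hc0, integral_Ioc_eq_integral_Ioo]
        refine MeasureTheory.setIntegral_eq_zero_of_forall_eq_zero ?_
        intro s hs
        have : ∀ r ∈ Ioo (0:ℝ) s, p r = 0 := fun r hr => by
          simp [hp, hzc r ⟨hr.1.le, hr.2.le.trans hs.2.le⟩]
        show (∫ r in (0:ℝ)..s, p r) = 0
        rw [intervalIntegral.integral_of_le hs.1.le, integral_Ioc_eq_integral_Ioo]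
        exact MeasureTheory.setIntegral_eq_zero_of_forall_eq_zero this
      -- bound F on [c, t]
      have hFbd : ∀ s ∈ Icc c t, F s ≤ A * M := by
        intro s hs
        have hsIcc : s ∈ Icc (0:ℝ) T := ⟨hc0.trans hs.1, hs.2.trans htIcc.2⟩
        -- F s = ∫_c^s p
        have hpint1 : IntervalIntegrable p volume 0 c := II_sub hpi le_rfl hc0 hcT
        have hpint2 : IntervalIntegrable p volume c s := II_sub hpi hc0 hs.1 hsIcc.2
        have hz2 : (∫ r in (0:ℝ)..c, p r) = 0 := by
          refine (intervalIntegral.integral_congr (g := fun _ => 0) ?_).trans (by simp)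
          intro r hr
          rw [uIcc_of_le hc0] at hr
          simp [hp, hzc r hr]
        have hFs : F s = ∫ r in c..s, p r := by
          show (∫ r in (0:ℝ)..s, p r) = _
          rw [← integral_add_adjacent_intervals hpint1 hpint2, hz2, zero_add]
        rw [hFs]
        -- ∫_c^s p ≤ ∫_c^s a * M ≤ A * M
        have step1 : (∫ r in c..s, p r) ≤ ∫ r in c..s, a r * M := by
          refine intervalIntegral.integral_mono_on hs.1 hpint2
            ((II_sub ha hc0 hs.1 hsIcc.2).mul_const M) ?_
          intro r hr
          have hrIcc : r ∈ Icc (0:ℝ) T := ⟨hc0.trans hr.1, hr.2.trans hsIcc.2⟩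
          have hrcd : r ∈ Icc c d := ⟨hr.1, hr.2.trans (hs.2.trans ht.2)⟩
          exact mul_le_mul_of_nonneg_left (ht₀max hrcd) (ha0 r hrIcc)
        have step2 : (∫ r in c..s, a r * M) = (∫ r in c..s, a r) * M :=
          intervalIntegral.integral_mul_const M a
        have step3 : (∫ r in c..s, a r) ≤ A := by
          rw [intervalIntegral.integral_of_le hs.1]
          refine setIntegral_mono_set (ha.mono_set Subset.rfl) ?_ ?_
          · exact ae_restrict_of_forall_mem measurableSet_Icc ha0
          · exact HasSubset.Subset.eventuallyLE (Ioc_subset_Icc_self.trans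
              (Icc_subset_Icc hc0 hsIcc.2))
        calc (∫ r in c..s, p r) ≤ (∫ r in c..s, a r) * M := by rw [← step2]; exact step1
          _ ≤ A * M := mul_le_mul_of_nonneg_right step3 hM0
      have h2 : (∫ s in c..t, F s) ≤ ∫ s in c..t, A * M :=
        intervalIntegral.integral_mono_on ht.1 hFint2 (intervalIntegrable_const) hFbd
      have h3 : (∫ s in c..t, (A * M : ℝ)) = (t - c) * (A * M) := by
        rw [intervalIntegral.integral_const, smul_eq_mul]
      have htc : t - c ≤ δ := by
        have := ht.2; simp only [hd] at this; linarith
      calc ψ t ≤ ∫ s in (0:ℝ)..t, F s := h1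
        _ = (∫ s in c..t, F s) := by rw [hsplit, hz1, zero_add]
        _ ≤ (t - c) * (A * M) := by rw [← h3]; exact h2
        _ ≤ δ * (A * M) := mul_le_mul_of_nonneg_right htc (by positivity)
    -- conclude M = 0
    have hMle : M ≤ δ * (A * M) := hbound t₀ ht₀
    have hδA : δ * A < 1 := by
      have h1 : δ ≤ 1 / (A + 1) := min_le_right _ _
      have : δ * A ≤ (1 / (A + 1)) * A := mul_le_mul_of_nonneg_right h1 hA0
      have h2 : (1 / (A + 1)) * A < 1 := by
        rw [div_mul_eq_mul_div, one_mul, div_lt_one (by positivity)]; linarith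
      linarith
    have hMz : M = 0 := by
      rcases eq_or_lt_of_le hM0 with h | h
      · exact h.symm
      · exfalso
        have : δ * (A * M) < M :=
          calc δ * (A * M) = (δ * A) * M := by ring
            _ < 1 * M := mul_lt_mul_of_pos_right hδA h
            _ = M := one_mul M
        linarith
    -- so d ∈ S, contradiction with c = sSup S
    have hdS : d ∈ S := by
      refine ⟨⟨hc0.trans hcd, hdT⟩, ?_⟩
      intro s hs
      rcases le_or_gt s c with h | h
      · exact hzc s ⟨hs.1, h⟩
      · have : ψ s ≤ δ * (A * M) := hbound s ⟨h.le, hs.2⟩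
        rw [hMz] at this
        simp only [mul_zero] at this
        exact le_antisymm this (hψ0 s ⟨hs.1, hs.2.trans hdT⟩)
    have : d ≤ c := le_csSup hSbdd hdS
    linarith
  · have hcT'' : c = T := le_antisymm hcT (not_lt.mp hcT')
    intro t ht
    exact hzc t ⟨ht.1, ht.2.trans_eq hcT''.symm⟩

theorem comparison_abs_potential
    (T : ℝ) (hT : 0 < T)
    (V u v : ℝ → ℝ)
    (hV : IntegrableOn V (Icc 0 T))
    (hu0 : u 0 = 0)
    (hu : ∀ t ∈ Icc (0:ℝ) T,
      HasDerivWithinAt u (1 + ∫ s in (0:ℝ)..t, |V s| * u s) (Icc (0:ℝ) T) t)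
    (hv0 : v 0 = 0)
    (hv : ∀ t ∈ Icc (0:ℝ) T,
      HasDerivWithinAt v (1 + ∫ s in (0:ℝ)..t, V s * v s) (Icc (0:ℝ) T) t) :
    ∀ t ∈ Icc (0:ℝ) T, v t ≤ u t := by
  have hucont : ContinuousOn u (Icc 0 T) := fun t ht => (hu t ht).continuousWithinAt
  have hvcont : ContinuousOn v (Icc 0 T) := fun t ht => (hv t ht).continuousWithinAt
  have hVabs : IntegrableOn (fun s => |V s|) (Icc 0 T) := hV.abs
  set g : ℝ → ℝ := fun r => |V r| * u r with hgdef
  set h : ℝ → ℝ := fun r => V r * v r with hhdef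
  set k : ℝ → ℝ := fun r => |V r| * |v r| with hkdef
  have hgi : IntegrableOn g (Icc 0 T) := hVabs.mul_continuousOn hucont isCompact_Icc
  have hhi : IntegrableOn h (Icc 0 T) := hV.mul_continuousOn hvcont isCompact_Icc
  have hki : IntegrableOn k (Icc 0 T) := hVabs.mul_continuousOn hvcont.abs isCompact_Icc
  have prim_cont : ∀ f : ℝ → ℝ, IntegrableOn f (Icc 0 T) →
      ContinuousOn (fun s => ∫ r in (0:ℝ)..s, f r) (Icc 0 T) := by
    intro f hf
    have := continuousOn_primitive_interval (μ := volume) (a := (0:ℝ)) (b := T)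
      (f := f) (by rwa [uIcc_of_le hT.le])
    rwa [uIcc_of_le hT.le] at this
  have hGc : ContinuousOn (fun s => ∫ r in (0:ℝ)..s, g r) (Icc 0 T) := prim_cont g hgi
  have hHc : ContinuousOn (fun s => ∫ r in (0:ℝ)..s, h r) (Icc 0 T) := prim_cont h hhi
  have hKc : ContinuousOn (fun s => ∫ r in (0:ℝ)..s, k r) (Icc 0 T) := prim_cont k hki
  -- integral identities
  have int_eq : ∀ (w f : ℝ → ℝ), w 0 = 0 →
      (∀ t ∈ Icc (0:ℝ) T, HasDerivWithinAt w (1 + ∫ r in (0:ℝ)..t, f r) (Icc (0:ℝ) T) t) →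
      ContinuousOn w (Icc 0 T) →
      ContinuousOn (fun s => ∫ r in (0:ℝ)..s, f r) (Icc 0 T) →
      ∀ t ∈ Icc (0:ℝ) T, w t = ∫ s in (0:ℝ)..t, (1 + ∫ r in (0:ℝ)..s, f r) := by
    intro w f hw0 hw hwc hfc t ht
    have := intervalIntegral.integral_eq_sub_of_hasDeriv_right_of_le ht.1
      (hwc.mono (Icc_subset_Icc le_rfl ht.2))
      (fun x hx => ((hw x ⟨hx.1.le, hx.2.le.trans ht.2⟩).hasDerivAt
        (Icc_mem_nhds hx.1 (hx.2.trans_le ht.2))).hasDerivWithinAt)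
      (((continuousOn_const.add hfc).mono (Icc_subset_Icc le_rfl ht.2)).intervalIntegrable_of_Icc
        ht.1)
    rw [hw0, sub_zero] at this
    exact this.symm
  have hueq := int_eq u g hu0 hu hucont hGc
  have hveq := int_eq v h hv0 hv hvcont hHc
  set ψ : ℝ → ℝ := fun t => max (|v t| - u t) 0 with hψdef
  have hψc : ContinuousOn ψ (Icc 0 T) := fun x hx => ((hvcont.abs.sub hucont) x hx).max continuousWithinAt_const
  have hψ0 : ∀ r, 0 ≤ ψ r := fun r => le_max_right _ _
  have hψub : ∀ r, |v r| - u r ≤ ψ r := fun r => le_max_left _ _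
  set p : ℝ → ℝ := fun r => |V r| * ψ r with hpdef
  have hpi : IntegrableOn p (Icc 0 T) := hVabs.mul_continuousOn hψc isCompact_Icc
  have hPc : ContinuousOn (fun s => ∫ r in (0:ℝ)..s, p r) (Icc 0 T) := prim_cont p hpi
  have key : ∀ t ∈ Icc (0:ℝ) T, ψ t ≤ ∫ s in (0:ℝ)..t, ∫ r in (0:ℝ)..s, |V r| * ψ r := by
    intro t ht
    have hRHS0 : (0:ℝ) ≤ ∫ s in (0:ℝ)..t, ∫ r in (0:ℝ)..s, p r :=
      intervalIntegral.integral_nonneg ht.1 fun s hs =>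
        intervalIntegral.integral_nonneg hs.1 fun r _ =>
          mul_nonneg (abs_nonneg _) (hψ0 r)
    refine max_le ?_ hRHS0
    -- step a : |v t| ≤ ∫₀ᵗ (1 + K s)
    have ii1 : IntervalIntegrable (fun s => |1 + ∫ r in (0:ℝ)..s, h r|) volume 0 t :=
      (((continuousOn_const.add hHc).abs).mono (Icc_subset_Icc le_rfl ht.2)).intervalIntegrable_of_Icc ht.1
    have ii2 : IntervalIntegrable (fun s => 1 + ∫ r in (0:ℝ)..s, k r) volume 0 t :=
      ((continuousOn_const.add hKc).mono (Icc_subset_Icc le_rfl ht.2)).intervalIntegrable_of_Icc ht.1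
    have ii3 : IntervalIntegrable (fun s => 1 + ∫ r in (0:ℝ)..s, g r) volume 0 t :=
      ((continuousOn_const.add hGc).mono (Icc_subset_Icc le_rfl ht.2)).intervalIntegrable_of_Icc ht.1
    have step_a : |v t| ≤ ∫ s in (0:ℝ)..t, (1 + ∫ r in (0:ℝ)..s, k r) := by
      rw [hveq t ht]
      calc |∫ s in (0:ℝ)..t, (1 + ∫ r in (0:ℝ)..s, h r)|
          ≤ ∫ s in (0:ℝ)..t, |1 + ∫ r in (0:ℝ)..s, h r| :=
            intervalIntegral.abs_integral_le_integral_abs ht.1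
        _ ≤ ∫ s in (0:ℝ)..t, (1 + ∫ r in (0:ℝ)..s, k r) := by
            refine intervalIntegral.integral_mono_on ht.1 ii1 ii2 ?_
            intro s hs
            have h1 : |1 + ∫ r in (0:ℝ)..s, h r| ≤ 1 + |∫ r in (0:ℝ)..s, h r| := by
              calc |1 + ∫ r in (0:ℝ)..s, h r| ≤ |(1:ℝ)| + |∫ r in (0:ℝ)..s, h r| := abs_add_le _ _
                _ = 1 + |∫ r in (0:ℝ)..s, h r| := by rw [abs_one]
            have h2 : |∫ r in (0:ℝ)..s, h r| ≤ ∫ r in (0:ℝ)..s, |h r| :=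
              intervalIntegral.abs_integral_le_integral_abs hs.1
            have h3 : (∫ r in (0:ℝ)..s, |h r|) = ∫ r in (0:ℝ)..s, k r := by
              refine intervalIntegral.integral_congr ?_
              intro r _
              show |V r * v r| = |V r| * |v r|
              exact abs_mul _ _
            linarith
    -- step b
    have hKG : ∀ s ∈ Icc (0:ℝ) t, (∫ r in (0:ℝ)..s, k r) - (∫ r in (0:ℝ)..s, g r)
        ≤ ∫ r in (0:ℝ)..s, p r := by
      intro s hs
      have hsT : s ∈ Icc (0:ℝ) T := ⟨hs.1, hs.2.trans ht.2⟩
      have iik : IntervalIntegrable k volume 0 s := II_sub hki le_rfl hs.1 hsT.2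
      have iig : IntervalIntegrable g volume 0 s := II_sub hgi le_rfl hs.1 hsT.2
      have iip : IntervalIntegrable p volume 0 s := II_sub hpi le_rfl hs.1 hsT.2
      rw [← intervalIntegral.integral_sub iik iig]
      refine intervalIntegral.integral_mono_on hs.1 (iik.sub iig) iip ?_
      intro r _
      show k r - g r ≤ p r
      calc k r - g r = |V r| * (|v r| - u r) := by simp only [hkdef, hgdef]; ring
        _ ≤ |V r| * ψ r := mul_le_mul_of_nonneg_left (hψub r) (abs_nonneg _)
    have step_b : (∫ s in (0:ℝ)..t, (1 + ∫ r in (0:ℝ)..s, k r))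
        - (∫ s in (0:ℝ)..t, (1 + ∫ r in (0:ℝ)..s, g r))
        ≤ ∫ s in (0:ℝ)..t, ∫ r in (0:ℝ)..s, p r := by
      rw [← intervalIntegral.integral_sub ii2 ii3]
      refine intervalIntegral.integral_mono_on ht.1 (ii2.sub ii3)
        (((hPc.mono (Icc_subset_Icc le_rfl ht.2)).intervalIntegrable_of_Icc ht.1)) ?_
      intro s hs
      have := hKG s hs
      linarith
    have huteq := hueq t ht
    have : |v t| - u t ≤ ∫ s in (0:ℝ)..t, ∫ r in (0:ℝ)..s, p r := by
      rw [huteq]; linarith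
    exact this
  have hzero := gronwall_aux T hT (fun r => |V r|) ψ hVabs (fun s _ => abs_nonneg _)
    hψc (fun s _ => hψ0 s) key
  intro t ht
  have hψt : ψ t = 0 := hzero t ht
  have h1 : |v t| - u t ≤ 0 := hψt ▸ hψub t
  have h2 : v t ≤ |v t| := le_abs_self _
  linarith
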